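/- For a portfolio with weights ω ∈ ℝⁿ, ω_i ≥ 0, Σω_i = 1, and returns following Model 2, the portfolio return ⟨ω, R⟩ is a one-dimensional random variable with log E[exp(-s⟨ω, R⟩)] = -s⟨ω, μ̃⟩ + (s²/2) ω Q ωᵀ + λ(exp(-s⟨ω, μ⟩ + (s²/2) ω A ωᵀ) - 1) for all s > 0; consequently EVaR_α(⟨ω, R⟩) = inf_{s>0} [(-s⟨ω, μ̃⟩ + (s²/2) ω Q ωᵀ + λ(exp(-s⟨ω, μ⟩ + (s²/2) ω A ωᵀ) - 1) - log α)/s]. -/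

import Mathlib

open MeasureTheory Real ProbabilityTheory Matrix


lemma measurable_dot {n : ℕ} (u : Fin n → ℝ) :
    Measurable fun v : Fin n → ℝ => u ⬝ᵥ v := by
  have : (fun v : Fin n → ℝ => u ⬝ᵥ v) = fun v => ∑ i, u i * v i := by
    funext v; rfl
  rw [this]
  exact Finset.measurable_sum _ fun i _ => by fun_prop

lemma measurable_expdot {n : ℕ} (u : Fin n → ℝ) :
    Measurable fun v : Fin n → ℝ => Real.exp (-(u ⬝ᵥ v)) :=
  Real.measurable_exp.comp (measurable_dot u).neg

lemma dot_finset_sum {n : ℕ} (u : Fin n → ℝ) (s : Finset ℕ) (v : ℕ → Fin n → ℝ) :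
    u ⬝ᵥ (∑ k ∈ s, v k) = ∑ k ∈ s, u ⬝ᵥ v k := by
  classical
  induction s using Finset.induction with
  | empty => simp [dotProduct]
  | insert a s h ih => simp [Finset.sum_insert h, dotProduct_add, ih]

lemma real_exp_eq_tsum (x : ℝ) : Real.exp x = ∑' n : ℕ, x ^ n / (n.factorial : ℝ) := by
  rw [Real.exp_eq_exp_ℝ, NormedSpace.exp_eq_tsum_div]

noncomputable def EVaR {Ω : Type*} [MeasurableSpace Ω] (μ : Measure Ω) (X : Ω → ℝ)
    (α : ℝ) : ℝ :=
  sInf ((fun s : ℝ => (Real.log (∫ ω, Real.exp (-s * X ω) ∂μ) - Real.log α) / s) '' Set.Ioi 0)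

theorem model2_portfolio_evar {Ω : Type*} [MeasurableSpace Ω]
    (μ : Measure Ω) [IsProbabilityMeasure μ] {n : ℕ}
    (μt μv : Fin n → ℝ) (Q A : Matrix (Fin n) (Fin n) ℝ) (lam : NNReal)
    (X : Ω → (Fin n → ℝ)) (hXm : Measurable X)
    (hXlaplace : ∀ u : Fin n → ℝ,
      ∫ ω, Real.exp (-(u ⬝ᵥ X ω)) ∂μ
        = Real.exp (-(u ⬝ᵥ μt) + (1 / 2) * (u ⬝ᵥ (Q *ᵥ u))))
    (W : ℕ → Ω → (Fin n → ℝ)) (hWm : ∀ k, Measurable (W k))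
    (hWlaplace : ∀ k (u : Fin n → ℝ),
      ∫ ω, Real.exp (-(u ⬝ᵥ W k ω)) ∂μ
        = Real.exp (-(u ⬝ᵥ μv) + (1 / 2) * (u ⬝ᵥ (A *ᵥ u))))
    (hWindep : iIndepFun W μ)
    (M : Ω → ℕ) (hMm : Measurable M)
    (hMd : Measure.map M μ = poissonMeasure lam)
    (hMW : IndepFun M (fun ω => fun k => W k ω) μ)
    (hXindep : IndepFun X (fun ω => ∑ k ∈ Finset.range (M ω), W k ω) μ)
    (R : Ω → (Fin n → ℝ))
    (hR : ∀ ω, R ω = X ω + ∑ k ∈ Finset.range (M ω), W k ω)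
    (w : Fin n → ℝ) (hw0 : ∀ i, 0 ≤ w i) (hw1 : ∑ i, w i = 1)
    (α : ℝ) (hα : α ∈ Set.Ioo (0 : ℝ) 1) :
    (∀ s : ℝ, 0 < s →
      Real.log (∫ ω, Real.exp (-s * (w ⬝ᵥ R ω)) ∂μ)
        = -s * (w ⬝ᵥ μt) + (s ^ 2 / 2) * (w ⬝ᵥ (Q *ᵥ w))
          + lam * (Real.exp (-s * (w ⬝ᵥ μv) + (s ^ 2 / 2) * (w ⬝ᵥ (A *ᵥ w))) - 1)) ∧
    EVaR μ (fun ω => w ⬝ᵥ R ω) α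
      = sInf ((fun s : ℝ =>
          (-s * (w ⬝ᵥ μt) + (s ^ 2 / 2) * (w ⬝ᵥ (Q *ᵥ w))
            + lam * (Real.exp (-s * (w ⬝ᵥ μv) + (s ^ 2 / 2) * (w ⬝ᵥ (A *ᵥ w))) - 1)
            - Real.log α) / s) '' Set.Ioi 0) := by
  classical
  -- abbreviations
  set S : Ω → (Fin n → ℝ) := fun ω => ∑ k ∈ Finset.range (M ω), W k ω with hS
  set Wv : Ω → (ℕ → Fin n → ℝ) := fun ω => fun k => W k ω with hWv
  have hWvm : Measurable Wv := measurable_pi_lambda _ fun k => hWm k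
  -- the main Laplace transform identity
  have main : ∀ s : ℝ,
      ∫ ω, Real.exp (-s * (w ⬝ᵥ R ω)) ∂μ
        = Real.exp (-s * (w ⬝ᵥ μt) + (s ^ 2 / 2) * (w ⬝ᵥ (Q *ᵥ w)))
          * Real.exp ((lam : ℝ) *
              (Real.exp (-s * (w ⬝ᵥ μv) + (s ^ 2 / 2) * (w ⬝ᵥ (A *ᵥ w))) - 1)) := by
    intro s
    set u : Fin n → ℝ := s • w with hu
    have hquad : ∀ (B : Matrix (Fin n) (Fin n) ℝ) (v : Fin n → ℝ),
        -(u ⬝ᵥ v) + (1 / 2) * (u ⬝ᵥ (B *ᵥ u))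
          = -s * (w ⬝ᵥ v) + (s ^ 2 / 2) * (w ⬝ᵥ (B *ᵥ w)) := by
      intro B v
      rw [hu, smul_dotProduct, smul_dotProduct, Matrix.mulVec_smul, dotProduct_smul,
        smul_eq_mul, smul_eq_mul, smul_eq_mul]
      ring
    have hudot : ∀ v : Fin n → ℝ, u ⬝ᵥ v = s * (w ⬝ᵥ v) := by
      intro v; rw [hu, smul_dotProduct, smul_eq_mul]
    set L : ℝ := Real.exp (-(u ⬝ᵥ μv) + (1 / 2) * (u ⬝ᵥ (A *ᵥ u))) with hL
    have hLpos : 0 < L := Real.exp_pos _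
    -- the i.i.d. product integrals
    set g : ℕ → Ω → ℝ := fun k ω => Real.exp (-(u ⬝ᵥ W k ω)) with hg
    have hgm : ∀ k, Measurable (g k) := fun k => (measurable_expdot u).comp (hWm k)
    have hgi : iIndepFun g μ :=
      hWindep.comp (fun _ v => Real.exp (-(u ⬝ᵥ v))) (fun _ => measurable_expdot u)
    have hPm : ∀ m : ℕ, Measurable fun ω => ∏ k ∈ Finset.range m, g k ω := fun m =>
      Finset.measurable_prod _ fun k _ => hgm k
    have hprod : ∀ m : ℕ, ∫ ω, ∏ k ∈ Finset.range m, g k ω ∂μ = L ^ m := by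
      intro m
      induction m with
      | zero => simp
      | succ m ih =>
        have hindep := hgi.indepFun_prod_range_succ hgm m
        have hPm' : Measurable (∏ j ∈ Finset.range m, g j) := by
          have he : (∏ j ∈ Finset.range m, g j) = fun ω => ∏ j ∈ Finset.range m, g j ω := by
            funext ω; exact Finset.prod_apply ω _ _
          rw [he]; exact hPm m
        have hmul := hindep.integral_mul_eq_mul_integral
          (hPm'.aestronglyMeasurable) ((hgm m).aestronglyMeasurable)
        have h1 : (∫ ω, ((∏ j ∈ Finset.range m, g j) * g m) ω ∂μ)
            = (∫ ω, (∏ j ∈ Finset.range m, g j) ω ∂μ) * ∫ ω, g m ω ∂μ := hmul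
        simp only [Pi.mul_apply, Finset.prod_apply] at h1
        have h2 : ∫ ω, ∏ k ∈ Finset.range (m + 1), g k ω ∂μ
            = (∫ ω, ∏ k ∈ Finset.range m, g k ω ∂μ) * ∫ ω, g m ω ∂μ := by
          simp_rw [Finset.prod_range_succ]; exact h1
        rw [h2, ih]
        have : ∫ ω, g m ω ∂μ = L := hWlaplace m u
        rw [this, pow_succ]
    have hPint : ∀ m : ℕ, Integrable (fun ω => ∏ k ∈ Finset.range m, g k ω) μ := by
      intro m
      by_contra h
      have h0 := integral_undef h
      rw [hprod m] at h0
      exact (pow_pos hLpos m).ne' h0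
    -- measurability of S
    have hΦ'm : Measurable fun p : (ℕ → Fin n → ℝ) × ℕ =>
        ∏ k ∈ Finset.range p.2, Real.exp (-(u ⬝ᵥ p.1 k)) := by
      apply measurable_from_prod_countable_left
      intro m
      show Measurable fun x : ℕ → Fin n → ℝ =>
        ∏ k ∈ Finset.range m, Real.exp (-(u ⬝ᵥ x k))
      exact Finset.measurable_prod _ fun k _ =>
        (measurable_expdot u).comp (measurable_pi_apply k)
    have hΨm : Measurable fun p : (ℕ → Fin n → ℝ) × ℕ =>
        ∑ k ∈ Finset.range p.2, p.1 k := by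
      apply measurable_from_prod_countable_left
      intro m
      show Measurable fun x : ℕ → Fin n → ℝ => ∑ k ∈ Finset.range m, x k
      exact Finset.measurable_sum _ fun k _ => measurable_pi_apply k
    have hSmeas : Measurable S := by
      have : S = (fun p : (ℕ → Fin n → ℝ) × ℕ => ∑ k ∈ Finset.range p.2, p.1 k)
          ∘ (fun ω => (Wv ω, M ω)) := by funext ω; simp [hS, hWv]
      rw [this]
      exact hΨm.comp (hWvm.prodMk hMm)
    -- Laplace transform of S (compound Poisson)
    have hSlap : ∫ ω, Real.exp (-(u ⬝ᵥ S ω)) ∂μ = Real.exp ((lam : ℝ) * (L - 1)) := by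
      have hpt : ∀ ω, Real.exp (-(u ⬝ᵥ S ω))
          = ∏ k ∈ Finset.range (M ω), Real.exp (-(u ⬝ᵥ W k ω)) := by
        intro ω
        rw [hS, dot_finset_sum, ← Real.exp_sum]
        congr 1
        rw [Finset.sum_neg_distrib]
      have hΦpair : ∀ ω, Real.exp (-(u ⬝ᵥ S ω))
          = (fun p : ℕ × (ℕ → Fin n → ℝ) =>
              ∏ k ∈ Finset.range p.1, Real.exp (-(u ⬝ᵥ p.2 k))) (M ω, Wv ω) := by
        intro ω; rw [hpt ω]
      have hΦm : Measurable fun p : ℕ × (ℕ → Fin n → ℝ) =>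
          ∏ k ∈ Finset.range p.1, Real.exp (-(u ⬝ᵥ p.2 k)) := by
        have : (fun p : ℕ × (ℕ → Fin n → ℝ) =>
            ∏ k ∈ Finset.range p.1, Real.exp (-(u ⬝ᵥ p.2 k)))
            = (fun q : (ℕ → Fin n → ℝ) × ℕ =>
                ∏ k ∈ Finset.range q.2, Real.exp (-(u ⬝ᵥ q.1 k))) ∘ Prod.swap := by
          funext p; rfl
        rw [this]; exact hΦ'm.comp measurable_swap
      have hΦnn : ∀ p : ℕ × (ℕ → Fin n → ℝ),
          0 ≤ ∏ k ∈ Finset.range p.1, Real.exp (-(u ⬝ᵥ p.2 k)) := fun p =>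
        Finset.prod_nonneg fun k _ => (Real.exp_pos _).le
      have hpairm : Measurable fun ω => (M ω, Wv ω) := hMm.prodMk hWvm
      have hmap : μ.map (fun ω => (M ω, Wv ω)) = (μ.map M).prod (μ.map Wv) :=
        (indepFun_iff_map_prod_eq_prod_map_map hMm.aemeasurable hWvm.aemeasurable).mp hMW
      haveI : IsProbabilityMeasure (μ.map Wv) := Measure.isProbabilityMeasure_map hWvm.aemeasurable
      -- move to lintegral
      have hnn : 0 ≤ᵐ[μ] fun ω => Real.exp (-(u ⬝ᵥ S ω)) :=
        Filter.Eventually.of_forall fun ω => (Real.exp_pos _).le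
      have hsm : AEStronglyMeasurable (fun ω => Real.exp (-(u ⬝ᵥ S ω))) μ :=
        ((measurable_expdot u).comp hSmeas).aestronglyMeasurable
      rw [integral_eq_lintegral_of_nonneg_ae hnn hsm]
      have hlin : ∫⁻ ω, ENNReal.ofReal (Real.exp (-(u ⬝ᵥ S ω))) ∂μ
          = ENNReal.ofReal (Real.exp ((lam : ℝ) * (L - 1))) := by
        have step1 : ∫⁻ ω, ENNReal.ofReal (Real.exp (-(u ⬝ᵥ S ω))) ∂μ
            = ∫⁻ p, ENNReal.ofReal
                (∏ k ∈ Finset.range p.1, Real.exp (-(u ⬝ᵥ p.2 k)))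
                ∂((μ.map M).prod (μ.map Wv)) := by
          rw [← hmap, lintegral_map hΦm.ennreal_ofReal hpairm]
          exact lintegral_congr fun ω => by rw [hΦpair ω]
        rw [step1, lintegral_prod _ hΦm.ennreal_ofReal.aemeasurable]
        have inner : ∀ m : ℕ, ∫⁻ v, ENNReal.ofReal
            (∏ k ∈ Finset.range m, Real.exp (-(u ⬝ᵥ v k))) ∂(μ.map Wv)
            = ENNReal.ofReal (L ^ m) := by
          intro m
          have hfm : Measurable fun v : ℕ → Fin n → ℝ =>
              ∏ k ∈ Finset.range m, Real.exp (-(u ⬝ᵥ v k)) :=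
            Finset.measurable_prod _ fun k _ => (measurable_expdot u).comp (measurable_pi_apply k)
          rw [lintegral_map hfm.ennreal_ofReal hWvm]
          have : ∀ ω, (∏ k ∈ Finset.range m, Real.exp (-(u ⬝ᵥ Wv ω k))) =
              ∏ k ∈ Finset.range m, g k ω := fun ω => rfl
          simp_rw [this]
          rw [← ofReal_integral_eq_lintegral_ofReal (hPint m)
            (Filter.Eventually.of_forall fun ω =>
              Finset.prod_nonneg fun k _ => (Real.exp_pos _).le), hprod m]
        simp_rw [inner]
        rw [hMd]
        show ∫⁻ m, ENNReal.ofReal (L ^ m) ∂(poissonMeasure lam)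
          = ENNReal.ofReal (Real.exp ((lam : ℝ) * (L - 1)))
        rw [lintegral_countable']
        have hsingle : ∀ m : ℕ, (poissonMeasure lam) {m}
            = ENNReal.ofReal (poissonPMFReal lam m) := fun m =>
          poissonMeasure_singleton lam m
        simp_rw [hsingle]
        have hterm : ∀ m : ℕ, ENNReal.ofReal (L ^ m) * ENNReal.ofReal (poissonPMFReal lam m)
            = ENNReal.ofReal (Real.exp (-(lam : ℝ)) * (((lam : ℝ) * L) ^ m / m.factorial)) := by
          intro m
          rw [← ENNReal.ofReal_mul (pow_nonneg hLpos.le m)]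
          congr 1
          rw [poissonPMFReal]
          rw [mul_pow]
          ring
        simp_rw [hterm]
        have hsum : Summable fun m : ℕ =>
            Real.exp (-(lam : ℝ)) * (((lam : ℝ) * L) ^ m / m.factorial) :=
          (Real.summable_pow_div_factorial _).mul_left _
        have hnn2 : ∀ m : ℕ,
            0 ≤ Real.exp (-(lam : ℝ)) * (((lam : ℝ) * L) ^ m / m.factorial) := by
          intro m
          apply mul_nonneg (Real.exp_pos _).le
          apply div_nonneg (pow_nonneg (mul_nonneg lam.coe_nonneg hLpos.le) m)
          exact_mod_cast (Nat.zero_le _)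
        rw [← ENNReal.ofReal_tsum_of_nonneg hnn2 hsum]
        congr 1
        rw [tsum_mul_left, ← real_exp_eq_tsum, ← Real.exp_add]
        congr 1
        ring
      rw [hlin, ENNReal.toReal_ofReal (Real.exp_pos _).le]
    -- independence of X and S parts
    have hfac : ∫ ω, Real.exp (-s * (w ⬝ᵥ R ω)) ∂μ
        = (∫ ω, Real.exp (-(u ⬝ᵥ X ω)) ∂μ) * ∫ ω, Real.exp (-(u ⬝ᵥ S ω)) ∂μ := by
      have hpt : ∀ ω, Real.exp (-s * (w ⬝ᵥ R ω))
          = Real.exp (-(u ⬝ᵥ X ω)) * Real.exp (-(u ⬝ᵥ S ω)) := by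
        intro ω
        rw [← Real.exp_add, hR ω]
        congr 1
        rw [dotProduct_add, hudot, hudot]
        ring
      have hindep : IndepFun (fun ω => Real.exp (-(u ⬝ᵥ X ω)))
          (fun ω => Real.exp (-(u ⬝ᵥ S ω))) μ :=
        hXindep.comp (measurable_expdot u) (measurable_expdot u)
      have hmul := hindep.integral_mul_eq_mul_integral
        (((measurable_expdot u).comp hXm).aestronglyMeasurable)
        (((measurable_expdot u).comp hSmeas).aestronglyMeasurable)
      calc ∫ ω, Real.exp (-s * (w ⬝ᵥ R ω)) ∂μ
          = ∫ ω, Real.exp (-(u ⬝ᵥ X ω)) * Real.exp (-(u ⬝ᵥ S ω)) ∂μ :=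
            integral_congr_ae (Filter.Eventually.of_forall fun ω => hpt ω)
        _ = (∫ ω, Real.exp (-(u ⬝ᵥ X ω)) ∂μ) * ∫ ω, Real.exp (-(u ⬝ᵥ S ω)) ∂μ := hmul
    rw [hfac, hXlaplace u, hSlap, hquad Q μt, hL, hquad A μv]
  have part1 : ∀ s : ℝ, 0 < s →
      Real.log (∫ ω, Real.exp (-s * (w ⬝ᵥ R ω)) ∂μ)
        = -s * (w ⬝ᵥ μt) + (s ^ 2 / 2) * (w ⬝ᵥ (Q *ᵥ w))
          + lam * (Real.exp (-s * (w ⬝ᵥ μv) + (s ^ 2 / 2) * (w ⬝ᵥ (A *ᵥ w))) - 1) := by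
    intro s _
    rw [main s, Real.log_mul (Real.exp_ne_zero _) (Real.exp_ne_zero _),
      Real.log_exp, Real.log_exp]
  refine ⟨part1, ?_⟩
  rw [EVaR]
  congr 1
  apply Set.image_congr
  intro s hs
  rw [Set.mem_Ioi] at hs
  have := part1 s hs
  rw [this]
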